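/- arXiv:1201.5867 — 3 statements merged into one kernel-verified Lean document; each statement's English description precedes it below -/
import Mathlib

section
/- With $\phi$ as above (Laplace exponent with poles at $\{\rho_n\}$ and $\{-\hat\rho_n\}$) and $q > 0$: for every $n \ge 1$ there exists a solution $\zeta_{n+1}$ of $\phi(z) = q$ in the open interval $(\rho_n, \rho_{n+1})$, and a solution $\hat\zeta_{n+1}$ in $(-\hat\rho_{n+1}, -\hat\rho_n)$; together with the solutions $\zeta_1\in(0,\rho_1)$ and $-\hat\zeta_1\in(-\hat\rho_1,0)$ this yields real zeros interlacing with the poles: $0 < \zeta_1 < \rho_1 < \zeta_2 < \rho_2 < \cdots$ and $0 < \hat\zeta_1 < \hat\rho_1 < \hat\zeta_2 < \hat\rho_2 < \cdots$. -/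
set_option maxHeartbeats 1000000

open Filter MeasureTheory Real Set


private lemma bound_exists (a ρ : ℕ → ℝ)
    (ha : ∀ n, 0 < a n) (hρ : ∀ n, 0 < ρ n)
    (hlim : Tendsto ρ atTop atTop)
    (hsum : Summable (fun n => a n / (ρ n) ^ 2))
    (x₁ x₂ : ℝ) (hx₁ : 0 ≤ x₁) (h12 : x₁ ≤ x₂)
    (hsep : ∀ k, ρ k < x₁ ∨ x₂ < ρ k) :
    ∃ B : ℕ → ℝ, Summable B ∧
      ∀ k, ∀ z ∈ Icc x₁ x₂, |a k / (ρ k * (ρ k - z))| ≤ B k := by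
  obtain ⟨N, hN⟩ := Filter.eventually_atTop.1 (hlim.eventually_ge_atTop (x₂ + 1))
  refine ⟨fun k =>
    if ρ k < x₁ then a k / (ρ k * (x₁ - ρ k))
    else if ρ k < x₂ + 1 then a k / (ρ k * (ρ k - x₂))
    else a k * (x₂ + 1) / (ρ k) ^ 2, ?_, ?_⟩
  · rw [← summable_nat_add_iff N]
    have base : Summable (fun k => a (k + N) * (x₂ + 1) / (ρ (k + N)) ^ 2) := by
      have : Summable (fun k => (x₂ + 1) * (a k / (ρ k) ^ 2)) := hsum.mul_left _
      have := (summable_nat_add_iff N).2 this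
      exact this.congr (fun k => by ring)
    refine base.congr (fun k => ?_)
    have h1 : x₂ + 1 ≤ ρ (k + N) := hN (k + N) (by omega)
    rw [if_neg (by linarith), if_neg (by linarith)]
  · intro k z hz
    obtain ⟨hz1, hz2⟩ := hz
    beta_reduce
    rw [abs_div, abs_mul, abs_of_pos (ha k), abs_of_pos (hρ k)]
    rcases hsep k with h | h
    · rw [if_pos h, abs_of_neg (by linarith : ρ k - z < 0)]
      have h1 : 0 < x₁ - ρ k := by linarith
      have h2 : x₁ - ρ k ≤ -(ρ k - z) := by linarith
      gcongr <;> first | exact (ha k).le | exact (hρ k).le | exact mul_pos (hρ k) h1 | exact h2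
    · rw [if_neg (by linarith)]
      have hρz : 0 < ρ k - z := by linarith
      rw [abs_of_pos hρz]
      by_cases h' : ρ k < x₂ + 1
      · rw [if_pos h']
        have h2 : ρ k - x₂ ≤ ρ k - z := by linarith
        have h1 : 0 < ρ k - x₂ := by linarith
        gcongr <;> first | exact (ha k).le | exact (hρ k).le | exact mul_pos (hρ k) h1 | exact h2
      · rw [if_neg h']
        push_neg at h'
        rw [div_le_div_iff₀ (mul_pos (hρ k) hρz) (pow_pos (hρ k) 2)]
        have key : ρ k ≤ (x₂ + 1) * (ρ k - z) := by nlinarith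
        calc a k * ρ k ^ 2 = (a k * ρ k) * ρ k := by ring
          _ ≤ (a k * ρ k) * ((x₂ + 1) * (ρ k - z)) :=
              mul_le_mul_of_nonneg_left key (mul_nonneg (ha k).le (hρ k).le)
          _ = a k * (x₂ + 1) * (ρ k * (ρ k - z)) := by ring

private lemma summable_f (a ρ : ℕ → ℝ)
    (ha : ∀ n, 0 < a n) (hρ : ∀ n, 0 < ρ n)
    (hlim : Tendsto ρ atTop atTop)
    (hsum : Summable (fun n => a n / (ρ n) ^ 2))
    (z : ℝ) (hz : 0 ≤ z) (hne : ∀ k, ρ k < z ∨ z < ρ k) :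
    Summable (fun k => a k / (ρ k * (ρ k - z))) := by
  obtain ⟨B, hB, hle⟩ := bound_exists a ρ ha hρ hlim hsum z z hz le_rfl hne
  exact Summable.of_abs
    (Summable.of_nonneg_of_le (fun k => abs_nonneg _) (fun k => hle k z ⟨le_rfl, le_rfl⟩) hB)

private lemma contS (a ρ : ℕ → ℝ)
    (ha : ∀ n, 0 < a n) (hρ : ∀ n, 0 < ρ n)
    (hlim : Tendsto ρ atTop atTop)
    (hsum : Summable (fun n => a n / (ρ n) ^ 2))
    (x₁ x₂ : ℝ) (hx₁ : 0 ≤ x₁) (h12 : x₁ ≤ x₂)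
    (hsep : ∀ k, ρ k < x₁ ∨ x₂ < ρ k) :
    ContinuousOn (fun z => ∑' k, a k / (ρ k * (ρ k - z))) (Icc x₁ x₂) := by
  obtain ⟨B, hB, hle⟩ := bound_exists a ρ ha hρ hlim hsum x₁ x₂ hx₁ h12 hsep
  refine continuousOn_tsum (fun k => ?_) hB (fun k z hz => by
    simpa only [Real.norm_eq_abs] using hle k z hz)
  refine continuousOn_const.div
    (continuousOn_const.mul (continuousOn_const.sub continuousOn_id)) (fun z hz => ?_)
  have hzz : ρ k - z ≠ 0 := by
    rcases hsep k with h | h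
    · exact ne_of_lt (by linarith [hz.1])
    · exact ne_of_gt (by linarith [hz.2])
  exact mul_ne_zero (hρ k).ne' hzz

private lemma g_le (ahat ρhat : ℕ → ℝ)
    (hahat : ∀ n, 0 < ahat n) (hρhat : ∀ n, 0 < ρhat n)
    (z : ℝ) (hz : 0 ≤ z) (k : ℕ) :
    ahat k / (ρhat k * (ρhat k + z)) ≤ ahat k / (ρhat k) ^ 2 := by
  rw [sq]
  have h1 : 0 < ρhat k * ρhat k := mul_pos (hρhat k) (hρhat k)
  have h2 : ρhat k * ρhat k ≤ ρhat k * (ρhat k + z) := by nlinarith [hρhat k]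
  gcongr
  exact (hahat k).le

private lemma summable_g (ahat ρhat : ℕ → ℝ)
    (hahat : ∀ n, 0 < ahat n) (hρhat : ∀ n, 0 < ρhat n)
    (hsumhat : Summable (fun n => ahat n / (ρhat n) ^ 2))
    (z : ℝ) (hz : 0 ≤ z) :
    Summable (fun k => ahat k / (ρhat k * (ρhat k + z))) := by
  refine Summable.of_nonneg_of_le (fun k => ?_) (fun k => g_le ahat ρhat hahat hρhat z hz k) hsumhat
  have : 0 < ρhat k + z := by linarith [hρhat k]
  exact (div_pos (hahat k) (mul_pos (hρhat k) this)).le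

private lemma tsum_g_le (ahat ρhat : ℕ → ℝ)
    (hahat : ∀ n, 0 < ahat n) (hρhat : ∀ n, 0 < ρhat n)
    (hsumhat : Summable (fun n => ahat n / (ρhat n) ^ 2))
    (z : ℝ) (hz : 0 ≤ z) :
    ∑' k, ahat k / (ρhat k * (ρhat k + z)) ≤ ∑' k, ahat k / (ρhat k) ^ 2 :=
  Summable.tsum_le_tsum (g_le ahat ρhat hahat hρhat z hz)
    (summable_g ahat ρhat hahat hρhat hsumhat z hz) hsumhat

private lemma contT (ahat ρhat : ℕ → ℝ)
    (hahat : ∀ n, 0 < ahat n) (hρhat : ∀ n, 0 < ρhat n)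
    (hsumhat : Summable (fun n => ahat n / (ρhat n) ^ 2))
    (x₁ x₂ : ℝ) (hx₁ : 0 ≤ x₁) :
    ContinuousOn (fun z => ∑' k, ahat k / (ρhat k * (ρhat k + z))) (Icc x₁ x₂) := by
  refine continuousOn_tsum (fun k => ?_) hsumhat (fun k z hz => ?_)
  · refine continuousOn_const.div
      (continuousOn_const.mul (continuousOn_const.add continuousOn_id)) (fun z hz => ?_)
    have : 0 < ρhat k + z := by linarith [hρhat k, hz.1]
    exact mul_ne_zero (hρhat k).ne' this.ne'
  · have hz0 : 0 ≤ z := le_trans hx₁ hz.1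
    have hpos : 0 < ρhat k + z := by linarith [hρhat k]
    rw [Real.norm_eq_abs, abs_of_pos (div_pos (hahat k) (mul_pos (hρhat k) hpos))]
    exact g_le ahat ρhat hahat hρhat z hz0 k

private lemma aux (σ μ : ℝ) (a ρ ahat ρhat : ℕ → ℝ)
    (ha : ∀ n, 0 < a n) (hρ : ∀ n, 0 < ρ n) (hahat : ∀ n, 0 < ahat n) (hρhat : ∀ n, 0 < ρhat n)
    (hmono : StrictMono ρ)
    (hlim : Tendsto ρ atTop atTop)
    (hsum : Summable (fun n => a n / (ρ n) ^ 2))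
    (hsumhat : Summable (fun n => ahat n / (ρhat n) ^ 2))
    (Φ : ℝ → ℝ)
    (hΦ : ∀ z : ℝ, Φ z = σ ^ 2 * z ^ 2 / 2 + μ * z
        + z ^ 2 * ∑' k, a k / (ρ k * (ρ k - z))
        + z ^ 2 * ∑' k, ahat k / (ρhat k * (ρhat k + z)))
    (q : ℝ) (hq : 0 < q) :
    ∃ ζ : ℕ → ℝ, (∀ n, Φ (ζ n) = q) ∧
      0 < ζ 0 ∧ (∀ n, ζ n < ρ n) ∧ (∀ n, ρ n < ζ (n + 1)) := by
  -- Step 1: upward crossing just left of each pole, plus IVT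
  have key : ∀ (m : ℕ) (L : ℝ), 0 ≤ L → L < ρ m → (∀ k, ρ k < ρ m → ρ k < L) →
      Φ L < q → ∃ z, Φ z = q ∧ L < z ∧ z < ρ m := by
    intro m L hL0 hLρ hsepL hΦL
    have hρm := hρ m
    set l' := (L + ρ m) / 2 with hl'
    have hl'0 : 0 < l' := by rw [hl']; linarith
    have hLl' : L < l' := by rw [hl']; linarith
    have hl'ρ : l' < ρ m := by rw [hl']; linarith
    set C := ∑ k ∈ Finset.range m, a k / (ρ k * (l' - ρ k)) with hC
    have hCnn : 0 ≤ C := by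
      rw [hC]
      refine Finset.sum_nonneg (fun k hk => ?_)
      have hkL : ρ k < L := hsepL k (hmono (Finset.mem_range.1 hk))
      exact div_nonneg (ha k).le (mul_nonneg (hρ k).le (by linarith))
    set D := q + |μ| * ρ m + ρ m ^ 2 * C + 1 with hD
    have hD0 : 0 < D := by
      rw [hD]
      have h1 : 0 ≤ |μ| * ρ m := mul_nonneg (abs_nonneg μ) hρm.le
      have h2 : 0 ≤ ρ m ^ 2 * C := mul_nonneg (sq_nonneg _) hCnn
      linarith
    set ε := min ((ρ m - l') / 2) (l' ^ 2 * a m / (ρ m * D)) with hε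
    have hε0 : 0 < ε :=
      lt_min (by linarith) (div_pos (mul_pos (pow_pos hl'0 2) (ha m)) (mul_pos hρm hD0))
    set z₂ := ρ m - ε with hz₂def
    have hεle : ε ≤ (ρ m - l') / 2 := min_le_left _ _
    have hεκ : ε ≤ l' ^ 2 * a m / (ρ m * D) := min_le_right _ _
    have hl'z₂ : l' < z₂ := by rw [hz₂def]; linarith
    have hz₂ρ : z₂ < ρ m := by rw [hz₂def]; linarith
    have hz₂0 : 0 < z₂ := lt_trans hl'0 hl'z₂
    have hLz₂ : L < z₂ := lt_trans hLl' hl'z₂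
    clear_value l' C D ε z₂
    have hsep2 : ∀ k, ρ k < L ∨ z₂ < ρ k := by
      intro k
      rcases lt_or_ge (ρ k) (ρ m) with h | h
      · exact Or.inl (hsepL k h)
      · exact Or.inr (lt_of_lt_of_le hz₂ρ h)
    have hsepz : ∀ k, ρ k < z₂ ∨ z₂ < ρ k :=
      fun k => (hsep2 k).imp (fun h => lt_trans h hLz₂) id
    have hsumf : Summable (fun k => a k / (ρ k * (ρ k - z₂))) :=
      summable_f a ρ ha hρ hlim hsum z₂ hz₂0.le hsepz
    have hsplit := Summable.sum_add_tsum_nat_add (f := fun k => a k / (ρ k * (ρ k - z₂))) (m + 1) hsumf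
    have htail : 0 ≤ ∑' k, a (k + (m + 1)) / (ρ (k + (m + 1)) * (ρ (k + (m + 1)) - z₂)) := by
      refine tsum_nonneg (fun k => ?_)
      have : ρ m < ρ (k + (m + 1)) := hmono (by omega)
      exact div_nonneg (ha _).le (mul_nonneg (hρ _).le (by linarith))
    have hsumlow : -C ≤ ∑ k ∈ Finset.range m, a k / (ρ k * (ρ k - z₂)) := by
      rw [hC, ← Finset.sum_neg_distrib]
      refine Finset.sum_le_sum (fun k hk => ?_)
      have hkL : ρ k < L := hsepL k (hmono (Finset.mem_range.1 hk))
      have h1 : 0 < l' - ρ k := by linarith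
      have h2 : 0 < z₂ - ρ k := by linarith
      rw [show ρ k - z₂ = -(z₂ - ρ k) by ring, mul_neg, div_neg, neg_le_neg_iff]
      have h3 : l' - ρ k ≤ z₂ - ρ k := by linarith
      gcongr
      · exact (ha k).le
      · exact mul_pos (hρ k) h1
      · exact (hρ k).le
    have hfm : a m / (ρ m * (ρ m - z₂)) = a m / (ρ m * ε) := by rw [hz₂def]; ring_nf
    have hS : -C + a m / (ρ m * ε) ≤ ∑' k, a k / (ρ k * (ρ k - z₂)) := by
      rw [← hsplit, Finset.sum_range_succ, hfm]
      linarith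
    have hTnn : 0 ≤ ∑' k, ahat k / (ρhat k * (ρhat k + z₂)) :=
      tsum_nonneg (fun k =>
        div_nonneg (hahat k).le (mul_nonneg (hρhat k).le (by linarith [hρhat k])))
    have hDle : D ≤ l' ^ 2 * (a m / (ρ m * ε)) := by
      rw [show l' ^ 2 * (a m / (ρ m * ε)) = l' ^ 2 * a m / (ρ m * ε) by ring,
        le_div_iff₀ (mul_pos hρm hε0)]
      calc D * (ρ m * ε) ≤ D * (ρ m * (l' ^ 2 * a m / (ρ m * D))) := by gcongr
        _ = l' ^ 2 * a m := by field_simp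
    have hΦz₂ : q < Φ z₂ := by
      rw [hΦ]
      have A1 : 0 ≤ σ ^ 2 * z₂ ^ 2 / 2 := by positivity
      have A2a : -|μ| * z₂ ≤ μ * z₂ := mul_le_mul_of_nonneg_right (neg_abs_le μ) hz₂0.le
      have A2b : -|μ| * ρ m ≤ -|μ| * z₂ :=
        mul_le_mul_of_nonpos_left hz₂ρ.le (neg_nonpos.2 (abs_nonneg μ))
      have A3 : z₂ ^ 2 * (-C + a m / (ρ m * ε)) ≤
          z₂ ^ 2 * ∑' k, a k / (ρ k * (ρ k - z₂)) :=
        mul_le_mul_of_nonneg_left hS (sq_nonneg z₂)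
      have A4 : z₂ ^ 2 * (-C + a m / (ρ m * ε)) =
          -(z₂ ^ 2 * C) + z₂ ^ 2 * (a m / (ρ m * ε)) := by ring
      have A5 : z₂ ^ 2 * C ≤ ρ m ^ 2 * C :=
        mul_le_mul_of_nonneg_right (pow_le_pow_left₀ hz₂0.le hz₂ρ.le 2) hCnn
      have hXnn : 0 ≤ a m / (ρ m * ε) := div_nonneg (ha m).le (mul_pos hρm hε0).le
      have A6 : l' ^ 2 * (a m / (ρ m * ε)) ≤ z₂ ^ 2 * (a m / (ρ m * ε)) :=
        mul_le_mul_of_nonneg_right (pow_le_pow_left₀ hl'0.le hl'z₂.le 2) hXnn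
      have A8 : 0 ≤ z₂ ^ 2 * ∑' k, ahat k / (ρhat k * (ρhat k + z₂)) :=
        mul_nonneg (sq_nonneg z₂) hTnn
      rw [hD] at hDle
      linarith
    have hcont : ContinuousOn Φ (Icc L z₂) := by
      have h1 : ContinuousOn (fun z : ℝ => σ ^ 2 * z ^ 2 / 2 + μ * z) (Icc L z₂) := by
        fun_prop
      have h2 := contS a ρ ha hρ hlim hsum L z₂ hL0 hLz₂.le hsep2
      have h3 := contT ahat ρhat hahat hρhat hsumhat L z₂ hL0
      have h4 : ContinuousOn (fun z : ℝ => z ^ 2) (Icc L z₂) := by fun_prop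
      exact ((h1.add (h4.mul h2)).add (h4.mul h3)).congr
        (fun z hz => by rw [hΦ z]; rfl)
    obtain ⟨c, hc, hcq⟩ := intermediate_value_Ioo hLz₂.le hcont ⟨hΦL, hΦz₂⟩
    exact ⟨c, hcq, hc.1, lt_trans hc.2 hz₂ρ⟩
  -- Step 2: downward value just right of each pole
  have low : ∀ n : ℕ, ∃ x, Φ x < q ∧ ρ n < x ∧ x < ρ (n + 1) := by
    intro n
    have hρn := hρ n
    have hρn1 := hρ (n + 1)
    have hρlt : ρ n < ρ (n + 1) := hmono (Nat.lt_succ_self n)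
    set u := (ρ n + ρ (n + 1)) / 2 with hu
    have hu1 : ρ n < u := by rw [hu]; linarith
    have hu2 : u < ρ (n + 1) := by rw [hu]; linarith
    have hu0 : 0 < u := lt_trans hρn hu1
    set c := 1 - u / ρ (n + 1) with hcdef
    have hc0 : 0 < c := by
      rw [hcdef]
      have : u / ρ (n + 1) < 1 := (div_lt_one hρn1).2 hu2
      linarith
    set D := (∑' k, a k / (ρ k) ^ 2) / c with hD
    have hAnn : 0 ≤ ∑' k, a k / (ρ k) ^ 2 :=
      tsum_nonneg fun k => div_nonneg (ha k).le (sq_nonneg _)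
    have hDnn : 0 ≤ D := div_nonneg hAnn hc0.le
    set E := ∑' k, ahat k / (ρhat k) ^ 2 with hE
    have hEnn : 0 ≤ E := tsum_nonneg fun k => div_nonneg (hahat k).le (sq_nonneg _)
    set K := σ ^ 2 * u ^ 2 / 2 + |μ| * u + u ^ 2 * D + u ^ 2 * E with hK
    have hKnn : 0 ≤ K := by
      rw [hK]
      have h1 : 0 ≤ |μ| * u := mul_nonneg (abs_nonneg μ) hu0.le
      have h2 : 0 ≤ u ^ 2 * D := mul_nonneg (sq_nonneg _) hDnn
      have h3 : 0 ≤ u ^ 2 * E := mul_nonneg (sq_nonneg _) hEnn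
      have h4 : 0 ≤ σ ^ 2 * u ^ 2 / 2 := by positivity
      linarith
    have hKq : 0 < K + q + 1 := by linarith
    set ε := min ((u - ρ n) / 2) (ρ n * a n / (K + q + 1)) with hε
    have hε0 : 0 < ε := lt_min (by linarith) (div_pos (mul_pos hρn (ha n)) hKq)
    have hεle : ε ≤ (u - ρ n) / 2 := min_le_left _ _
    have hεr : ε ≤ ρ n * a n / (K + q + 1) := min_le_right _ _
    set z₁ := ρ n + ε with hz₁def
    have hz₁l : ρ n < z₁ := by rw [hz₁def]; linarith
    have hz₁u : z₁ < u := by rw [hz₁def]; linarith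
    have hz₁0 : 0 < z₁ := lt_trans hρn hz₁l
    clear_value u c D E K ε z₁
    have hsepz : ∀ k, ρ k < z₁ ∨ z₁ < ρ k := by
      intro k
      rcases le_or_gt k n with h | h
      · exact Or.inl (lt_of_le_of_lt (hmono.monotone h) hz₁l)
      · right
        have : ρ (n + 1) ≤ ρ k := hmono.monotone h
        linarith
    have hsumf : Summable (fun k => a k / (ρ k * (ρ k - z₁))) :=
      summable_f a ρ ha hρ hlim hsum z₁ hz₁0.le hsepz
    have hsplit := Summable.sum_add_tsum_nat_add (f := fun k => a k / (ρ k * (ρ k - z₁))) (n + 1) hsumf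
    have hB1 : ∑ k ∈ Finset.range n, a k / (ρ k * (ρ k - z₁)) ≤ 0 := by
      refine Finset.sum_nonpos (fun k hk => ?_)
      have hkρ : ρ k < ρ n := hmono (Finset.mem_range.1 hk)
      refine div_nonpos_of_nonneg_of_nonpos (ha k).le ?_
      nlinarith [hρ k]
    have hB2 : a n / (ρ n * (ρ n - z₁)) = -(a n / (ρ n * ε)) := by
      rw [hz₁def, show ρ n - (ρ n + ε) = -ε by ring, mul_neg, div_neg]
    have htail : ∑' k, a (k + (n + 1)) / (ρ (k + (n + 1)) * (ρ (k + (n + 1)) - z₁)) ≤ D := by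
      have hsumtail : Summable
          (fun k => a (k + (n + 1)) / (ρ (k + (n + 1)) * (ρ (k + (n + 1)) - z₁))) :=
        (summable_nat_add_iff (n + 1)).2 hsumf
      have hsumD : Summable (fun k => (a k / (ρ k) ^ 2) / c) := hsum.div_const c
      have hsumD' : Summable (fun k => (a (k + (n + 1)) / (ρ (k + (n + 1))) ^ 2) / c) :=
        (summable_nat_add_iff (n + 1)).2 hsumD
      have hterm : ∀ k, a (k + (n + 1)) / (ρ (k + (n + 1)) * (ρ (k + (n + 1)) - z₁)) ≤
          (a (k + (n + 1)) / (ρ (k + (n + 1))) ^ 2) / c := by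
        intro k
        set j := k + (n + 1) with hj
        have hjge : ρ (n + 1) ≤ ρ j := hmono.monotone (by omega)
        have h2 : u / ρ (n + 1) * ρ (n + 1) ≤ u / ρ (n + 1) * ρ j :=
          mul_le_mul_of_nonneg_left hjge (div_nonneg hu0.le hρn1.le)
        have h3 : u / ρ (n + 1) * ρ (n + 1) = u := by field_simp
        have h1 : c * ρ j ≤ ρ j - z₁ := by
          rw [hcdef]
          have hexp : (1 - u / ρ (n + 1)) * ρ j = ρ j - u / ρ (n + 1) * ρ j := by ring
          linarith
        have hpos : 0 < ρ j - z₁ := lt_of_lt_of_le (mul_pos hc0 (hρ j)) h1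
        rw [div_div]
        have h5 : ρ j ^ 2 * c ≤ ρ j * (ρ j - z₁) := by
          calc ρ j ^ 2 * c = ρ j * (c * ρ j) := by ring
            _ ≤ ρ j * (ρ j - z₁) := mul_le_mul_of_nonneg_left h1 (hρ j).le
        gcongr
        · exact (ha j).le
        · exact mul_pos (pow_pos (hρ j) 2) hc0
      have h4 := Summable.tsum_le_tsum hterm hsumtail hsumD'
      have h6 := Summable.sum_add_tsum_nat_add (f := fun k => (a k / (ρ k) ^ 2) / c) (n + 1) hsumD
      have h7 : 0 ≤ ∑ k ∈ Finset.range (n + 1), (a k / (ρ k) ^ 2) / c :=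
        Finset.sum_nonneg fun k _ =>
          div_nonneg (div_nonneg (ha k).le (sq_nonneg _)) hc0.le
      have h8 : ∑' k, (a k / (ρ k) ^ 2) / c = (∑' k, a k / (ρ k) ^ 2) / c := tsum_div_const
      rw [hD]
      linarith
    have hSle : ∑' k, a k / (ρ k * (ρ k - z₁)) ≤ -(a n / (ρ n * ε)) + D := by
      rw [← hsplit, Finset.sum_range_succ, hB2]
      linarith
    have hTle : ∑' k, ahat k / (ρhat k * (ρhat k + z₁)) ≤ E := by
      rw [hE]
      exact tsum_g_le ahat ρhat hahat hρhat hsumhat z₁ hz₁0.le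
    have hTnn : 0 ≤ ∑' k, ahat k / (ρhat k * (ρhat k + z₁)) :=
      tsum_nonneg (fun k =>
        div_nonneg (hahat k).le (mul_nonneg (hρhat k).le (by linarith [hρhat k])))
    have hKey : K + q + 1 ≤ ρ n ^ 2 * (a n / (ρ n * ε)) := by
      have hid : ρ n ^ 2 * (a n / (ρ n * ε)) = ρ n * a n / ε := by
        field_simp
      rw [hid, le_div_iff₀ hε0]
      calc (K + q + 1) * ε ≤ (K + q + 1) * (ρ n * a n / (K + q + 1)) := by gcongr
        _ = ρ n * a n := by field_simp
    have hΦz₁ : Φ z₁ < q := by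
      rw [hΦ]
      have hsq : z₁ ^ 2 ≤ u ^ 2 := pow_le_pow_left₀ hz₁0.le hz₁u.le 2
      have A1 : σ ^ 2 * z₁ ^ 2 / 2 ≤ σ ^ 2 * u ^ 2 / 2 := by
        have := mul_le_mul_of_nonneg_left hsq (sq_nonneg σ)
        linarith
      have A2a : μ * z₁ ≤ |μ| * z₁ := mul_le_mul_of_nonneg_right (le_abs_self μ) hz₁0.le
      have A2b : |μ| * z₁ ≤ |μ| * u := mul_le_mul_of_nonneg_left hz₁u.le (abs_nonneg μ)
      have A3 : z₁ ^ 2 * ∑' k, a k / (ρ k * (ρ k - z₁)) ≤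
          z₁ ^ 2 * (-(a n / (ρ n * ε)) + D) :=
        mul_le_mul_of_nonneg_left hSle (sq_nonneg z₁)
      have A4 : z₁ ^ 2 * (-(a n / (ρ n * ε)) + D) =
          -(z₁ ^ 2 * (a n / (ρ n * ε))) + z₁ ^ 2 * D := by ring
      have hXnn : 0 ≤ a n / (ρ n * ε) := div_nonneg (ha n).le (mul_pos hρn hε0).le
      have A5 : ρ n ^ 2 * (a n / (ρ n * ε)) ≤ z₁ ^ 2 * (a n / (ρ n * ε)) :=
        mul_le_mul_of_nonneg_right (pow_le_pow_left₀ hρn.le hz₁l.le 2) hXnn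
      have A6 : z₁ ^ 2 * D ≤ u ^ 2 * D := mul_le_mul_of_nonneg_right hsq hDnn
      have A7 : z₁ ^ 2 * ∑' k, ahat k / (ρhat k * (ρhat k + z₁)) ≤ u ^ 2 * E := by
        calc z₁ ^ 2 * ∑' k, ahat k / (ρhat k * (ρhat k + z₁)) ≤ z₁ ^ 2 * E :=
              mul_le_mul_of_nonneg_left hTle (sq_nonneg z₁)
          _ ≤ u ^ 2 * E := mul_le_mul_of_nonneg_right hsq hEnn
      rw [hK] at hKey
      linarith
    exact ⟨z₁, hΦz₁, hz₁l, lt_trans hz₁u hu2⟩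
  -- Step 3: assemble
  have h0 : ∃ z, Φ z = q ∧ 0 < z ∧ z < ρ 0 := by
    have hΦ0 : Φ 0 = 0 := by rw [hΦ]; ring
    exact key 0 0 le_rfl (hρ 0)
      (fun k hk => absurd (hmono.lt_iff_lt.1 hk) (Nat.not_lt_zero k))
      (by rw [hΦ0]; exact hq)
  have hs : ∀ n, ∃ z, Φ z = q ∧ ρ n < z ∧ z < ρ (n + 1) := by
    intro n
    obtain ⟨x₁, hx₁q, hx₁l, hx₁r⟩ := low n
    have hx₁0 : 0 ≤ x₁ := le_of_lt (lt_trans (hρ n) hx₁l)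
    have hsep : ∀ k, ρ k < ρ (n + 1) → ρ k < x₁ := by
      intro k hk
      have hkn : k ≤ n := Nat.lt_succ_iff.1 (hmono.lt_iff_lt.1 hk)
      exact lt_of_le_of_lt (hmono.monotone hkn) hx₁l
    obtain ⟨z, hzq, hzl, hzr⟩ := key (n + 1) x₁ hx₁0 hx₁r hsep hx₁q
    exact ⟨z, hzq, lt_trans hx₁l hzl, hzr⟩
  refine ⟨fun m => Nat.rec (Classical.choose h0) (fun n _ => Classical.choose (hs n)) m,
    ?_, ?_, ?_, ?_⟩
  · intro n
    cases n with
    | zero => exact (Classical.choose_spec h0).1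
    | succ n => exact (Classical.choose_spec (hs n)).1
  · exact (Classical.choose_spec h0).2.1
  · intro n
    cases n with
    | zero => exact (Classical.choose_spec h0).2.2
    | succ n => exact (Classical.choose_spec (hs n)).2.2
  · intro n
    exact (Classical.choose_spec (hs n)).2.1

theorem stmt4 (σ μ : ℝ) (hσ : 0 ≤ σ)
    (a ρ ahat ρhat : ℕ → ℝ)
    (ha : ∀ n, 0 < a n) (hρ : ∀ n, 0 < ρ n) (hahat : ∀ n, 0 < ahat n) (hρhat : ∀ n, 0 < ρhat n)
    (hmono : StrictMono ρ) (hmonohat : StrictMono ρhat)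
    (hlim : Tendsto ρ atTop atTop) (hlimhat : Tendsto ρhat atTop atTop)
    (hsum : Summable (fun n => a n / (ρ n) ^ 2))
    (hsumhat : Summable (fun n => ahat n / (ρhat n) ^ 2))
    (φ : ℝ → ℝ)
    (hφ : ∀ z : ℝ, φ z = σ ^ 2 * z ^ 2 / 2 + μ * z
        + z ^ 2 * ∑' n, a n / (ρ n * (ρ n - z))
        + z ^ 2 * ∑' n, ahat n / (ρhat n * (ρhat n + z)))
    (q : ℝ) (hq : 0 < q) :
    ∃ ζ ζhat : ℕ → ℝ,
      (∀ n, φ (ζ n) = q) ∧ (∀ n, φ (-(ζhat n)) = q) ∧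
      0 < ζ 0 ∧ (∀ n, ζ n < ρ n) ∧ (∀ n, ρ n < ζ (n + 1)) ∧
      0 < ζhat 0 ∧ (∀ n, ζhat n < ρhat n) ∧ (∀ n, ρhat n < ζhat (n + 1)) := by
  obtain ⟨ζ, hζq, hζ0, hζlt, hζgt⟩ :=
    aux σ μ a ρ ahat ρhat ha hρ hahat hρhat hmono hlim hsum hsumhat φ hφ q hq
  obtain ⟨ζhat, hhq, hh0, hhlt, hhgt⟩ :=
    aux σ (-μ) ahat ρhat a ρ hahat hρhat ha hρ hmonohat hlimhat hsumhat hsum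
      (fun x => φ (-x)) (fun z => by
        show φ (-z) = _
        rw [hφ (-z)]
        have e1 : ∑' k, a k / (ρ k * (ρ k - -z)) = ∑' k, a k / (ρ k * (ρ k + z)) :=
          tsum_congr fun k => by ring_nf
        have e2 : ∑' k, ahat k / (ρhat k * (ρhat k + -z)) =
            ∑' k, ahat k / (ρhat k * (ρhat k - z)) :=
          tsum_congr fun k => by ring_nf
        rw [e1, e2]; ring) q hq
  exact ⟨ζ, ζhat, hζq, hhq, hζ0, hζlt, hζgt, hh0, hhlt, hhgt⟩
end

section
/- Let $(\rho_n)$ and $(\zeta_n)$ be sequences of positive reals with $0 < \zeta_1 < \rho_1 < \zeta_2 < \rho_2 < \cdots$ and $\rho_n \to \infty$. Then for every complex $z$ with $\mathrm{Re}(z) > 0$, the infinite product $\prod_{n\ge1} \frac{1 + z/\rho_n}{1 + z/\zeta_n}$ converges. -/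
open Filter Set

theorem stmt6 (ρ ζ : ℕ → ℝ)
    (hζ0 : 0 < ζ 0) (h1 : ∀ n, ζ n < ρ n) (h2 : ∀ n, ρ n < ζ (n + 1))
    (hlim : Tendsto ρ atTop atTop) :
    ∀ z : ℂ, 0 < z.re →
      Multipliable (fun n => (1 + z / (ρ n : ℂ)) / (1 + z / (ζ n : ℂ))) := by
  intro z hz
  -- positivity of the sequences
  have hζpos : ∀ n, 0 < ζ n := by
    intro n
    induction n with
    | zero => exact hζ0
    | succ k ih => exact ih.trans ((h1 k).trans (h2 k))
  have hρpos : ∀ n, 0 < ρ n := fun n => (hζpos n).trans (h1 n)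
  -- basic facts about 1 + z / r for r > 0
  have key : ∀ r : ℝ, 0 < r → 1 ≤ ‖(1 + z / (r : ℂ))‖ := by
    intro r hr
    have hre : (1 + z / (r : ℂ)).re = 1 + z.re / r := by
      simp [Complex.add_re, Complex.div_re, Complex.normSq_ofReal]
      field_simp
    have h1' : (1 : ℝ) ≤ (1 + z / (r : ℂ)).re := by
      rw [hre]; nlinarith [div_pos hz hr]
    exact h1'.trans ((Complex.re_le_norm _))
  have hne : ∀ r : ℝ, 0 < r → (1 + z / (r : ℂ)) ≠ 0 := by
    intro r hr h
    have := key r hr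
    rw [h] at this
    simp at this
    linarith
  -- the "remainder" w n and its bound
  set f : ℕ → ℂ := fun n => (1 + z / (ρ n : ℂ)) / (1 + z / (ζ n : ℂ)) with hf
  have hfne : ∀ n, f n ≠ 0 := fun n =>
    div_ne_zero (hne _ (hρpos n)) (hne _ (hζpos n))
  have hweq : ∀ n, f n - 1 = (z / (ρ n : ℂ) - z / (ζ n : ℂ)) / (1 + z / (ζ n : ℂ)) := by
    intro n
    rw [hf, div_sub_one (hne _ (hζpos n))]
    ring_nf
  have hwbound : ∀ n, ‖f n - 1‖ ≤ ‖z‖ * (1 / ζ n - 1 / ρ n) := by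
    intro n
    rw [hweq n, norm_div]
    have h2' : ‖z / (ρ n : ℂ) - z / (ζ n : ℂ)‖ = ‖z‖ * (1 / ζ n - 1 / ρ n) := by
      have : z / (ρ n : ℂ) - z / (ζ n : ℂ) = z * ((1 / ρ n - 1 / ζ n : ℝ) : ℂ) := by
        push_cast
        ring
      rw [this, norm_mul, Complex.norm_real, Real.norm_eq_abs, abs_of_nonpos]
      · ring
      · have := one_div_le_one_div_of_le (hζpos n) (h1 n).le
        linarith
    rw [h2']
    have hnum : 0 ≤ ‖z‖ * (1 / ζ n - 1 / ρ n) := by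
      apply mul_nonneg (norm_nonneg z)
      have := one_div_le_one_div_of_le (hζpos n) (h1 n).le
      linarith
    exact div_le_self hnum (key _ (hζpos n))
  -- summability of the bound
  have hsum : Summable (fun n => ‖z‖ * (1 / ζ n - 1 / ρ n)) := by
    apply Summable.mul_left
    have hsub : Summable (fun n => 1 / ζ n - 1 / ζ (n + 1)) := by
      apply summable_of_sum_range_le (c := 1 / ζ 0)
      · intro n
        have := one_div_le_one_div_of_le (hζpos n) ((h1 n).trans (h2 n)).le
        linarith
      · intro n
        rw [Finset.sum_range_sub' (fun k => 1 / ζ k)]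
        have : 0 < 1 / ζ n := one_div_pos.mpr (hζpos n)
        linarith
    apply hsub.of_nonneg_of_le
    · intro n
      have := one_div_le_one_div_of_le (hζpos n) (h1 n).le
      linarith
    · intro n
      have := one_div_le_one_div_of_le (hρpos n) (h2 n).le
      linarith
  -- summability of the logs
  have hlog : Summable (fun n => Complex.log (f n)) := by
    apply Summable.of_norm_bounded_eventually_nat
      (g := fun n => 3 / 2 * (‖z‖ * (1 / ζ n - 1 / ρ n))) (hsum.mul_left _)
    have htend : Tendsto (fun n => ‖z‖ * (1 / ζ n - 1 / ρ n)) atTop (nhds 0) :=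
      hsum.tendsto_atTop_zero
    filter_upwards [htend.eventually_le_const (by norm_num : (0:ℝ) < 1/2)] with n hn
    have hsmall : ‖f n - 1‖ ≤ 1 / 2 := (hwbound n).trans hn
    have : Complex.log (f n) = Complex.log (1 + (f n - 1)) := by ring_nf
    rw [this]
    exact (Complex.norm_log_one_add_half_le_self hsmall).trans
      (by nlinarith [hwbound n, norm_nonneg (f n - 1)])
  exact Complex.multipliable_of_summable_log hlog
end

section
/- Let $\chi \in (0,3)$, $k = \chi - 1/2$, and $\pi_\chi(x) = c_1\beta_1 e^{-\alpha_1 x}\Theta_k(x\beta_1)$ for $x > 0$, with $c_1, \alpha_1, \beta_1 > 0$ and $\Theta_k(x) = \delta_{k,0} + 2\sum_{n\ge1} n^{2k} e^{-n^2 x}$. Then $\pi_\chi(x) \sim \Gamma(\chi)\, c_1 \beta_1^{1-\chi} x^{-\chi}$ as $x \to 0^+$, i.e., $\lim_{x\to0^+} x^{\chi}\pi_\chi(x) = \Gamma(\chi) c_1\beta_1^{1-\chi}$. -/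
open Filter MeasureTheory Set Real

noncomputable def Theta (k x : ℝ) : ℝ :=
  (if k = 0 then (1 : ℝ) else 0) +
    2 * ∑' n : ℕ, ((n : ℝ) + 1) ^ (2 * k) * Real.exp (-((n : ℝ) + 1) ^ 2 * x)


open intervalIntegral Topology

noncomputable def gg (k y u : ℝ) : ℝ := u ^ (2*k) * Real.exp (-y * u^2)

lemma gg_nonneg {k y u : ℝ} (hu : 0 ≤ u) : 0 ≤ gg k y u :=
  mul_nonneg (Real.rpow_nonneg hu _) (Real.exp_pos _).le

lemma gg_anti {k y : ℝ} (hk : k ≤ 0) (hy : 0 < y) {a b : ℝ} (ha : 0 < a) (hab : a ≤ b) :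
    gg k y b ≤ gg k y a := by
  unfold gg
  apply mul_le_mul
  · exact Real.rpow_le_rpow_of_nonpos ha hab (by linarith)
  · apply Real.exp_le_exp.2
    have : a^2 ≤ b^2 := by nlinarith
    nlinarith
  · exact (Real.exp_pos _).le
  · exact Real.rpow_nonneg ha.le _

lemma gg_integrableOn {k y : ℝ} (hk : -1 < 2*k) (hy : 0 < y) :
    IntegrableOn (gg k y) (Ioi 0) :=
  integrableOn_rpow_mul_exp_neg_mul_sq hy hk

lemma gg_integral {k χ y : ℝ} (hk : -1 < 2*k) (hχ : χ = k + 1/2) (hy : 0 < y) :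
    ∫ u in Ioi (0:ℝ), gg k y u = y ^ (-χ) * (1/2) * Real.Gamma χ := by
  unfold gg
  rw [show (fun u : ℝ => u ^ (2*k) * Real.exp (-y * u^2)) = fun u : ℝ => u ^ (2*k) * Real.exp (-y * u ^ (2:ℝ)) from ?_]
  · rw [integral_rpow_mul_exp_neg_mul_rpow two_pos hk hy]
    rw [hχ]
    ring_nf
  · funext u
    rw [Real.rpow_two]

lemma gg_contOn {k y : ℝ} {s : Set ℝ} (hs : ∀ u ∈ s, u ≠ 0) :
    ContinuousOn (gg k y) s := by
  apply ContinuousOn.mul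
  · exact ContinuousOn.rpow_const continuousOn_id (fun u hu => Or.inl (hs u hu))
  · exact (Real.continuous_exp.comp (continuous_const.mul (continuous_pow 2))).continuousOn

lemma gg_intervalIntegrable {k y a b : ℝ} (ha : 0 < a) (hb : 0 < b) :
    IntervalIntegrable (gg k y) volume a b := by
  apply (gg_contOn ?_).intervalIntegrable
  intro u hu
  rcases le_total a b with h | h
  · rw [uIcc_of_le h] at hu; exact ne_of_gt (lt_of_lt_of_le ha hu.1)
  · rw [uIcc_of_ge h] at hu; exact ne_of_gt (lt_of_lt_of_le hb hu.1)

lemma gg_summable {k y : ℝ} (hk6 : 2*k ≤ 6) (hy : 0 < y) :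
    Summable (fun n : ℕ => gg k y ((n:ℝ)+1)) := by
  have hr : ‖Real.exp (-y)‖ < 1 := by
    rw [Real.norm_eq_abs, abs_of_pos (Real.exp_pos _)]
    exact Real.exp_lt_one_iff.2 (by linarith)
  have hsum : Summable (fun n : ℕ => ((n:ℝ)+1) ^ (6:ℕ) * Real.exp (-y) ^ (n+1)) := by
    have := (summable_nat_add_iff (f := fun n : ℕ => (n:ℝ) ^ (6:ℕ) * Real.exp (-y) ^ n) 1).2
      (summable_pow_mul_geometric_of_norm_lt_one 6 hr)
    exact this.congr (fun n => by push_cast; ring)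
  apply Summable.of_nonneg_of_le (fun n => gg_nonneg (by positivity)) ?_ hsum
  intro n
  unfold gg
  have h1 : (1:ℝ) ≤ (n:ℝ)+1 := by linarith [Nat.cast_nonneg (α := ℝ) n]
  apply mul_le_mul
  · calc ((n:ℝ)+1) ^ (2*k) ≤ ((n:ℝ)+1) ^ ((6:ℕ):ℝ) := by
          apply Real.rpow_le_rpow_of_exponent_le h1
          push_cast; linarith
        _ = ((n:ℝ)+1) ^ (6:ℕ) := Real.rpow_natCast _ 6
  · rw [← Real.exp_nat_mul]
    apply Real.exp_le_exp.2
    push_cast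
    nlinarith [mul_nonneg (mul_nonneg hy.le (by positivity : (0:ℝ) ≤ (n:ℝ)+1)) (Nat.cast_nonneg (α := ℝ) n)]
  · exact (Real.exp_pos _).le
  · positivity

lemma gg_le_one {k y : ℝ} (hy : 0 < y) : gg k y 1 ≤ 1 := by
  unfold gg
  rw [Real.one_rpow, one_mul]
  apply Real.exp_le_one_iff.2
  nlinarith

lemma gg_small {k y : ℝ} (hk : -1 < 2*k) (hy : 0 < y) :
    ∫ u in Ioc (0:ℝ) 1, gg k y u ≤ 1/(2*k+1) := by
  have hrpow_int : IntegrableOn (fun u : ℝ => u ^ (2*k)) (Ioc (0:ℝ) 1) :=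
    (intervalIntegral.intervalIntegrable_rpow' hk (a := 0) (b := 1)).1
  have hgi : IntegrableOn (gg k y) (Ioc (0:ℝ) 1) :=
    (gg_integrableOn hk hy).mono_set Ioc_subset_Ioi_self
  have h1 : ∫ u in Ioc (0:ℝ) 1, gg k y u ≤ ∫ u in Ioc (0:ℝ) 1, u ^ (2*k) := by
    apply setIntegral_mono_on hgi hrpow_int measurableSet_Ioc
    intro u hu
    unfold gg
    nth_rewrite 2 [← mul_one (u ^ (2*k))]
    apply mul_le_mul_of_nonneg_left ?_ (Real.rpow_nonneg hu.1.le _)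
    apply Real.exp_le_one_iff.2
    nlinarith [hu.1, sq_nonneg u]
  have h2 : ∫ u in Ioc (0:ℝ) 1, u ^ (2*k) = 1/(2*k+1) := by
    rw [← intervalIntegral.integral_of_le zero_le_one,
      integral_rpow (Or.inl hk), Real.one_rpow, Real.zero_rpow (by linarith)]
    ring
  linarith

lemma gg_split {k y : ℝ} (hk : -1 < 2*k) (hy : 0 < y) :
    ∫ u in Ioi (0:ℝ), gg k y u
      = (∫ u in Ioc (0:ℝ) 1, gg k y u) + ∫ u in Ioi (1:ℝ), gg k y u := by
  rw [← Set.Ioc_union_Ioi_eq_Ioi zero_le_one]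
  exact setIntegral_union (Set.Ioc_disjoint_Ioi le_rfl) measurableSet_Ioi
    ((gg_integrableOn hk hy).mono_set Ioc_subset_Ioi_self)
    ((gg_integrableOn hk hy).mono_set (Ioi_subset_Ioi zero_le_one))

lemma gg_sum_integral {k y : ℝ} (N : ℕ) :
    ∑ i ∈ Finset.range N, ∫ u in ((i:ℝ)+1)..((i:ℝ)+2), gg k y u
      = ∫ u in (1:ℝ)..((N:ℝ)+1), gg k y u := by
  have h := intervalIntegral.sum_integral_adjacent_intervals
    (a := fun i : ℕ => (i:ℝ)+1) (n := N) (μ := volume) (f := gg k y) ?_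
  · rw [show ((0:ℕ):ℝ)+1 = (1:ℝ) by norm_num] at h
    rw [← h]
    apply Finset.sum_congr rfl
    intro i _
    congr 1
    push_cast; ring
  · intro i _
    apply gg_intervalIntegrable <;> positivity

lemma gg_tendsto_interval {k y : ℝ} (hk : -1 < 2*k) (hy : 0 < y) :
    Tendsto (fun N : ℕ => ∫ u in (1:ℝ)..((N:ℝ)+1), gg k y u) atTop
      (𝓝 (∫ u in Ioi (1:ℝ), gg k y u)) := by
  apply intervalIntegral_tendsto_integral_Ioi 1
    ((gg_integrableOn hk hy).mono_set (Ioi_subset_Ioi zero_le_one))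
  apply tendsto_atTop_add_const_right
  exact tendsto_natCast_atTop_atTop

lemma gg_interval_le_Ioi {k y : ℝ} (hk : -1 < 2*k) (hy : 0 < y) (N : ℕ) :
    ∫ u in (1:ℝ)..((N:ℝ)+1), gg k y u ≤ ∫ u in Ioi (0:ℝ), gg k y u := by
  rw [intervalIntegral.integral_of_le (by linarith [Nat.cast_nonneg (α := ℝ) N])]
  apply setIntegral_mono_set (gg_integrableOn hk hy)
  · filter_upwards [ae_restrict_mem measurableSet_Ioi] with u hu
    exact gg_nonneg (le_of_lt hu)
  · exact HasSubset.Subset.eventuallyLE (fun u hu => lt_trans one_pos hu.1)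

lemma gg_int_le_left {k y : ℝ} (hk : k ≤ 0) (hy : 0 < y) (i : ℕ) :
    ∫ u in ((i:ℝ)+1)..((i:ℝ)+2), gg k y u ≤ gg k y ((i:ℝ)+1) := by
  have h := intervalIntegral.integral_mono_on (a := (i:ℝ)+1) (b := (i:ℝ)+2)
    (by linarith) (gg_intervalIntegrable (by positivity) (by positivity))
    (_root_.intervalIntegrable_const (c := gg k y ((i:ℝ)+1)))
    (fun u hu => gg_anti hk hy (by positivity) hu.1)
  rw [intervalIntegral.integral_const] at h
  have : ((i:ℝ)+2 - ((i:ℝ)+1)) = 1 := by ring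
  rw [this, one_smul] at h
  exact h

lemma gg_right_le_int {k y : ℝ} (hk : k ≤ 0) (hy : 0 < y) (i : ℕ) :
    gg k y ((i:ℝ)+2) ≤ ∫ u in ((i:ℝ)+1)..((i:ℝ)+2), gg k y u := by
  have h := intervalIntegral.integral_mono_on (a := (i:ℝ)+1) (b := (i:ℝ)+2)
    (by linarith) (_root_.intervalIntegrable_const (c := gg k y ((i:ℝ)+2)))
    (gg_intervalIntegrable (by positivity) (by positivity))
    (fun u hu => gg_anti hk hy (lt_of_lt_of_le (by positivity) hu.1) hu.2)
  rw [intervalIntegral.integral_const] at h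
  have : ((i:ℝ)+2 - ((i:ℝ)+1)) = 1 := by ring
  rw [this, one_smul] at h
  exact h

lemma anti_upper {k y : ℝ} (hk : k ≤ 0) (hk' : -1 < 2*k) (hy : 0 < y) :
    ∑' n : ℕ, gg k y ((n:ℝ)+1) ≤ (∫ u in Ioi (0:ℝ), gg k y u) + 1 := by
  apply tsum_le_of_sum_range_le (fun n => gg_nonneg (by positivity))
  intro N
  match N with
  | 0 =>
    simp only [Finset.range_zero, Finset.sum_empty]
    have : 0 ≤ ∫ u in Ioi (0:ℝ), gg k y u := setIntegral_nonneg measurableSet_Ioi (fun u hu => gg_nonneg (le_of_lt hu))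
    linarith
  | (N+1) =>
    rw [Finset.sum_range_succ']
    have h1 : ∑ i ∈ Finset.range N, gg k y ((i:ℝ)+1+1)
        ≤ ∫ u in (1:ℝ)..((N:ℝ)+1), gg k y u := by
      rw [← gg_sum_integral]
      apply Finset.sum_le_sum
      intro i _
      have := gg_right_le_int hk hy i
      rw [show (i:ℝ)+1+1 = (i:ℝ)+2 by ring]; exact this
    have h2 := gg_interval_le_Ioi hk' hy N
    push_cast
    have h4 : gg k y (0+1) ≤ 1 := by
      simpa using gg_le_one (k := k) hy
    push_cast at h1
    linarith

lemma anti_lower {k y : ℝ} (hk : k ≤ 0) (hk' : -1 < 2*k) (hk6 : 2*k ≤ 6) (hy : 0 < y) :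
    (∫ u in Ioi (1:ℝ), gg k y u) ≤ ∑' n : ℕ, gg k y ((n:ℝ)+1) := by
  apply le_of_tendsto_of_tendsto' (gg_tendsto_interval hk' hy)
    (gg_summable hk6 hy).hasSum.tendsto_sum_nat
  intro N
  rw [← gg_sum_integral]
  apply Finset.sum_le_sum
  intro i _
  exact gg_int_le_left hk hy i

noncomputable def psi (k y u : ℝ) : ℝ :=
  2*k*(u^(2*k-1) * Real.exp (-y * u^2)) + 2*y*(u^(2*k+1) * Real.exp (-y * u^2))

lemma psi_nonneg {k y u : ℝ} (hk : 0 < k) (hy : 0 < y) (hu : 0 ≤ u) : 0 ≤ psi k y u := by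
  unfold psi
  have h1 := Real.rpow_nonneg hu (2*k-1)
  have h2 := Real.rpow_nonneg hu (2*k+1)
  have h3 := (Real.exp_pos (-y * u^2)).le
  positivity

lemma psi_contOn {k y : ℝ} {s : Set ℝ} (hs : ∀ u ∈ s, u ≠ 0) :
    ContinuousOn (psi k y) s := by
  have he : ContinuousOn (fun u : ℝ => Real.exp (-y * u^2)) s :=
    (Real.continuous_exp.comp (continuous_const.mul (continuous_pow 2))).continuousOn
  apply ContinuousOn.add
  · exact continuousOn_const.mul ((ContinuousOn.rpow_const continuousOn_id
      (fun u hu => Or.inl (hs u hu))).mul he)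
  · exact continuousOn_const.mul ((ContinuousOn.rpow_const continuousOn_id
      (fun u hu => Or.inl (hs u hu))).mul he)

lemma psi_intervalIntegrable {k y a b : ℝ} (ha : 0 < a) (hb : 0 < b) :
    IntervalIntegrable (psi k y) volume a b := by
  apply (psi_contOn ?_).intervalIntegrable
  intro u hu
  rcases le_total a b with h | h
  · rw [uIcc_of_le h] at hu; exact ne_of_gt (lt_of_lt_of_le ha hu.1)
  · rw [uIcc_of_ge h] at hu; exact ne_of_gt (lt_of_lt_of_le hb hu.1)

lemma psi_integrableOn {k y : ℝ} (hk : 0 < k) (hy : 0 < y) :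
    IntegrableOn (psi k y) (Ioi 0) := by
  apply Integrable.add
  · exact ((integrableOn_rpow_mul_exp_neg_mul_sq hy (by linarith : (-1:ℝ) < 2*k-1)).const_mul _)
  · exact ((integrableOn_rpow_mul_exp_neg_mul_sq hy (by linarith : (-1:ℝ) < 2*k+1)).const_mul _)

lemma rpow_exp_integral {s χ y : ℝ} (hs : -1 < s) (hχ : χ = (s+1)/2) (hy : 0 < y) :
    ∫ u in Ioi (0:ℝ), u ^ s * Real.exp (-y * u^2) = y ^ (-χ) * (1/2) * Real.Gamma χ := by
  rw [show (fun u : ℝ => u ^ s * Real.exp (-y * u^2))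
      = fun u : ℝ => u ^ s * Real.exp (-y * u ^ (2:ℝ)) from funext fun u => by rw [Real.rpow_two]]
  rw [integral_rpow_mul_exp_neg_mul_rpow two_pos hs hy, hχ]
  ring_nf

lemma psi_integral {k y : ℝ} (hk : 0 < k) (hy : 0 < y) :
    ∫ u in Ioi (0:ℝ), psi k y u = (k * Real.Gamma k + Real.Gamma (k+1)) * y ^ (-k) := by
  unfold psi
  rw [integral_add (((integrableOn_rpow_mul_exp_neg_mul_sq hy (by linarith : (-1:ℝ) < 2*k-1)).const_mul _))
      (((integrableOn_rpow_mul_exp_neg_mul_sq hy (by linarith : (-1:ℝ) < 2*k+1)).const_mul _)),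
    MeasureTheory.integral_const_mul, MeasureTheory.integral_const_mul,
    rpow_exp_integral (by linarith : (-1:ℝ) < 2*k-1) (by ring : k = (2*k-1+1)/2) hy,
    rpow_exp_integral (by linarith : (-1:ℝ) < 2*k+1) (by ring : k+1 = (2*k+1+1)/2) hy]
  have hy1 : y * y ^ (-(k+1)) = y ^ (-k) := by
    nth_rewrite 1 [← Real.rpow_one y]
    rw [← Real.rpow_add hy]
    norm_num
  calc 2*k*(y^(-k) * (1/2) * Real.Gamma k) + 2*y*(y^(-(k+1)) * (1/2) * Real.Gamma (k+1))
      = k * Real.Gamma k * y^(-k) + (y * y^(-(k+1))) * Real.Gamma (k+1) := by ring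
    _ = (k * Real.Gamma k + Real.Gamma (k+1)) * y ^ (-k) := by rw [hy1]; ring

noncomputable def gder (k y u : ℝ) : ℝ :=
  (2*k*u^(2*k-1) - 2*y*u^(2*k+1)) * Real.exp (-y * u^2)

lemma gg_hasDerivAt {k y u : ℝ} (hu : 0 < u) :
    HasDerivAt (gg k y) (gder k y u) u := by
  have h1 : HasDerivAt (fun v : ℝ => v ^ (2*k)) (2*k * u^(2*k-1)) u := by
    simpa [mul_comm] using Real.hasDerivAt_rpow_const (x := u) (p := 2*k) (Or.inl hu.ne')
  have h2 : HasDerivAt (fun v : ℝ => -y * v^2) (-y * (2*u)) u := by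
    simpa using (hasDerivAt_pow 2 u).const_mul (-y)
  have h4 := h1.mul h2.exp
  refine h4.congr_deriv ?_
  unfold gder
  rw [show 2*k+1 = (2*k)+1 from rfl, Real.rpow_add_one hu.ne']
  ring

lemma gder_contOn {k y : ℝ} {s : Set ℝ} (hs : ∀ u ∈ s, u ≠ 0) :
    ContinuousOn (gder k y) s := by
  have he : ContinuousOn (fun u : ℝ => Real.exp (-y * u^2)) s :=
    (Real.continuous_exp.comp (continuous_const.mul (continuous_pow 2))).continuousOn
  apply ContinuousOn.mul ?_ he
  apply ContinuousOn.sub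
  · exact continuousOn_const.mul (ContinuousOn.rpow_const continuousOn_id
      (fun u hu => Or.inl (hs u hu)))
  · exact continuousOn_const.mul (ContinuousOn.rpow_const continuousOn_id
      (fun u hu => Or.inl (hs u hu)))

lemma gder_abs_le_psi {k y u : ℝ} (hk : 0 < k) (hy : 0 < y) (hu : 0 < u) :
    |gder k y u| ≤ psi k y u := by
  unfold gder psi
  rw [abs_mul, abs_of_pos (Real.exp_pos _)]
  have h1 : (0:ℝ) ≤ 2*k*u^(2*k-1) := by
    have := Real.rpow_nonneg hu.le (2*k-1); positivity
  have h2 : (0:ℝ) ≤ 2*y*u^(2*k+1) := by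
    have := Real.rpow_nonneg hu.le (2*k+1); positivity
  have h3 : |2*k*u^(2*k-1) - 2*y*u^(2*k+1)| ≤ 2*k*u^(2*k-1) + 2*y*u^(2*k+1) := by
    rcases abs_cases (2*k*u^(2*k-1) - 2*y*u^(2*k+1)) with ⟨h, _⟩ | ⟨h, _⟩ <;> linarith
  calc |2*k*u^(2*k-1) - 2*y*u^(2*k+1)| * Real.exp (-y*u^2)
      ≤ (2*k*u^(2*k-1) + 2*y*u^(2*k+1)) * Real.exp (-y*u^2) :=
        mul_le_mul_of_nonneg_right h3 (Real.exp_pos _).le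
    _ = _ := by ring

lemma key_interval {k y : ℝ} (hk : 0 < k) (hy : 0 < y) {a : ℝ} (ha : 1 ≤ a) :
    |(∫ u in a..(a+1), gg k y u) - gg k y a| ≤ ∫ u in a..(a+1), psi k y u := by
  have ha0 : (0:ℝ) < a := lt_of_lt_of_le one_pos ha
  have ha1 : (0:ℝ) < a + 1 := by linarith
  have hgint : IntervalIntegrable (gg k y) volume a (a+1) := gg_intervalIntegrable ha0 ha1
  -- Step A
  have stepA : ∀ u ∈ Icc a (a+1), |gg k y u - gg k y a| ≤ ∫ t in a..(a+1), psi k y t := by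
    intro u hu
    have hu0 : (0:ℝ) < u := lt_of_lt_of_le ha0 hu.1
    have ftc : ∫ t in a..u, gder k y t = gg k y u - gg k y a := by
      apply intervalIntegral.integral_eq_sub_of_hasDerivAt
      · intro t ht
        rw [uIcc_of_le hu.1] at ht
        exact gg_hasDerivAt (lt_of_lt_of_le ha0 ht.1)
      · apply (gder_contOn ?_).intervalIntegrable
        intro t ht
        rw [uIcc_of_le hu.1] at ht
        exact ne_of_gt (lt_of_lt_of_le ha0 ht.1)
    rw [← ftc]
    calc |∫ t in a..u, gder k y t| ≤ |∫ t in a..u, psi k y t| := by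
          rw [← Real.norm_eq_abs (∫ t in a..u, gder k y t)]
          apply intervalIntegral.norm_integral_le_abs_of_norm_le ?_
            (psi_intervalIntegrable ha0 hu0)
          filter_upwards [ae_restrict_mem measurableSet_uIoc] with t ht
          rw [uIoc_of_le hu.1] at ht
          rw [Real.norm_eq_abs]
          exact gder_abs_le_psi hk hy (lt_of_lt_of_le ha0 ht.1.le)
      _ = ∫ t in a..u, psi k y t := abs_of_nonneg (by
          rw [intervalIntegral.integral_of_le hu.1]
          exact setIntegral_nonneg measurableSet_Ioc
            (fun t ht => psi_nonneg hk hy (le_of_lt (lt_of_lt_of_le ha0 ht.1.le))))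
      _ ≤ ∫ t in a..(a+1), psi k y t := by
          apply intervalIntegral.integral_mono_interval le_rfl hu.1 hu.2
          · filter_upwards [ae_restrict_mem measurableSet_Ioc] with t ht
            exact psi_nonneg hk hy (le_of_lt (lt_of_lt_of_le ha0 ht.1.le))
          · exact psi_intervalIntegrable ha0 ha1
  -- Step B
  have hsub : (∫ u in a..(a+1), gg k y u) - gg k y a
      = ∫ u in a..(a+1), (gg k y u - gg k y a) := by
    rw [intervalIntegral.integral_sub hgint (_root_.intervalIntegrable_const (c := gg k y a)),
      intervalIntegral.integral_const]
    simp
  rw [hsub]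
  have := intervalIntegral.norm_integral_le_of_norm_le_const
    (C := ∫ t in a..(a+1), psi k y t) (a := a) (b := a+1)
    (f := fun u => gg k y u - gg k y a) ?_
  · simpa [Real.norm_eq_abs] using this
  · intro u hu
    rw [uIoc_of_le (by linarith : a ≤ a+1)] at hu
    exact stepA u ⟨hu.1.le, hu.2⟩

lemma psi_sum_integral {k y : ℝ} (N : ℕ) :
    ∑ i ∈ Finset.range N, ∫ u in ((i:ℝ)+1)..((i:ℝ)+2), psi k y u
      = ∫ u in (1:ℝ)..((N:ℝ)+1), psi k y u := by
  have h := intervalIntegral.sum_integral_adjacent_intervals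
    (a := fun i : ℕ => (i:ℝ)+1) (n := N) (μ := volume) (f := psi k y) ?_
  · rw [show ((0:ℕ):ℝ)+1 = (1:ℝ) by norm_num] at h
    rw [← h]
    apply Finset.sum_congr rfl
    intro i _
    congr 1
    push_cast; ring
  · intro i _
    apply psi_intervalIntegrable <;> positivity

lemma psi_interval_le_Ioi {k y : ℝ} (hk : 0 < k) (hy : 0 < y) (N : ℕ) :
    ∫ u in (1:ℝ)..((N:ℝ)+1), psi k y u ≤ ∫ u in Ioi (0:ℝ), psi k y u := by
  rw [intervalIntegral.integral_of_le (by linarith [Nat.cast_nonneg (α := ℝ) N])]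
  apply setIntegral_mono_set (psi_integrableOn hk hy)
  · filter_upwards [ae_restrict_mem measurableSet_Ioi] with u hu
    exact psi_nonneg hk hy (le_of_lt hu)
  · exact HasSubset.Subset.eventuallyLE (fun u hu => lt_trans one_pos hu.1)

lemma pos_partial_bound {k y : ℝ} (hk : 0 < k) (hy : 0 < y) (N : ℕ) :
    |(∑ i ∈ Finset.range N, gg k y ((i:ℝ)+1)) - ∫ u in (1:ℝ)..((N:ℝ)+1), gg k y u|
      ≤ ∫ u in Ioi (0:ℝ), psi k y u := by
  have h1 : (∑ i ∈ Finset.range N, gg k y ((i:ℝ)+1)) - ∫ u in (1:ℝ)..((N:ℝ)+1), gg k y u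
      = ∑ i ∈ Finset.range N, (gg k y ((i:ℝ)+1) - ∫ u in ((i:ℝ)+1)..((i:ℝ)+2), gg k y u) := by
    rw [Finset.sum_sub_distrib, gg_sum_integral]
  rw [h1]
  calc |∑ i ∈ Finset.range N, (gg k y ((i:ℝ)+1) - ∫ u in ((i:ℝ)+1)..((i:ℝ)+2), gg k y u)|
      ≤ ∑ i ∈ Finset.range N, |gg k y ((i:ℝ)+1) - ∫ u in ((i:ℝ)+1)..((i:ℝ)+2), gg k y u| :=
        Finset.abs_sum_le_sum_abs _ _
    _ ≤ ∑ i ∈ Finset.range N, ∫ u in ((i:ℝ)+1)..((i:ℝ)+2), psi k y u := by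
        apply Finset.sum_le_sum
        intro i _
        rw [abs_sub_comm]
        have h := key_interval hk hy (a := (i:ℝ)+1) (by linarith [Nat.cast_nonneg (α := ℝ) i])
        rw [show (i:ℝ)+1+1 = (i:ℝ)+2 by ring] at h
        exact h
    _ = ∫ u in (1:ℝ)..((N:ℝ)+1), psi k y u := psi_sum_integral N
    _ ≤ ∫ u in Ioi (0:ℝ), psi k y u := psi_interval_le_Ioi hk hy N

lemma pos_S_bound {k y : ℝ} (hk : 0 < k) (hk6 : 2*k ≤ 6) (hy : 0 < y) :
    |(∑' n : ℕ, gg k y ((n:ℝ)+1)) - ∫ u in Ioi (1:ℝ), gg k y u|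
      ≤ ∫ u in Ioi (0:ℝ), psi k y u := by
  have hk' : (-1:ℝ) < 2*k := by linarith
  have h1 : Tendsto (fun N : ℕ => |(∑ i ∈ Finset.range N, gg k y ((i:ℝ)+1))
      - ∫ u in (1:ℝ)..((N:ℝ)+1), gg k y u|) atTop
      (𝓝 |(∑' n : ℕ, gg k y ((n:ℝ)+1)) - ∫ u in Ioi (1:ℝ), gg k y u|) := by
    apply Tendsto.abs
    exact Tendsto.sub (gg_summable hk6 hy).hasSum.tendsto_sum_nat (gg_tendsto_interval hk' hy)
  exact le_of_tendsto h1 (Eventually.of_forall (pos_partial_bound hk hy))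

lemma tendsto_rpow_zero' {p : ℝ} (hp : 0 < p) :
    Tendsto (fun y : ℝ => y ^ p) (𝓝[>] (0:ℝ)) (𝓝 0) := by
  have h := (Real.continuousAt_rpow_const 0 p (Or.inr hp.le)).tendsto
  rw [Real.zero_rpow hp.ne'] at h
  exact h.mono_left nhdsWithin_le_nhds

lemma main_tendsto {k χ : ℝ} (hk' : -1 < 2*k) (hk6 : 2*k ≤ 6) (hχ : χ = k + 1/2) :
    Tendsto (fun y : ℝ => y ^ χ * ∑' n : ℕ, gg k y ((n:ℝ)+1)) (𝓝[>] (0:ℝ))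
      (𝓝 (Real.Gamma χ / 2)) := by
  have hχ0 : 0 < χ := by rw [hχ]; linarith
  set C : ℝ := if 0 < k then k * Real.Gamma k + Real.Gamma (k+1) else 0 with hCdef
  set D : ℝ := 1/(2*k+1) + 1 with hDdef
  have hD0 : 0 < 1/(2*k+1) := by apply one_div_pos.2; linarith
  have key : ∀ y : ℝ, 0 < y →
      |y ^ χ * (∑' n : ℕ, gg k y ((n:ℝ)+1)) - Real.Gamma χ / 2|
        ≤ y ^ χ * D + C * y ^ (1/2 : ℝ) := by
    intro y hy
    have hyp : 0 < y ^ χ := Real.rpow_pos_of_pos hy χ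
    have hγ : y ^ χ * (∫ u in Ioi (0:ℝ), gg k y u) = Real.Gamma χ / 2 := by
      rw [gg_integral hk' hχ hy,
        show y^χ * (y^(-χ) * (1/2) * Real.Gamma χ)
          = (y^χ * y^(-χ)) * ((1/2) * Real.Gamma χ) by ring,
        ← Real.rpow_add hy, add_neg_cancel, Real.rpow_zero, one_mul]
      ring
    have hsplit := gg_split hk' hy
    have hsmall := gg_small hk' hy
    have hsmall0 : 0 ≤ ∫ u in Ioc (0:ℝ) 1, gg k y u :=
      setIntegral_nonneg measurableSet_Ioc (fun u hu => gg_nonneg hu.1.le)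
    rcases lt_or_ge 0 k with hkpos | hkneg
    · have hC : C = k * Real.Gamma k + Real.Gamma (k+1) := if_pos hkpos
      have hSb := pos_S_bound hkpos hk6 hy
      rw [psi_integral hkpos hy] at hSb
      have hhalf : y ^ χ * y ^ (-k) = y ^ (1/2 : ℝ) := by
        rw [← Real.rpow_add hy, show χ + -k = 1/2 by rw [hχ]; ring]
      rw [abs_le] at hSb ⊢
      obtain ⟨hSb1, hSb2⟩ := hSb
      have hy2 : 0 < y ^ (-k) := Real.rpow_pos_of_pos hy _
      constructor
      · have h6 : (∫ u in Ioi (0:ℝ), gg k y u) - 1/(2*k+1)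
            - (k * Real.Gamma k + Real.Gamma (k+1)) * y ^ (-k)
            ≤ ∑' n : ℕ, gg k y ((n:ℝ)+1) := by linarith
        have h7 := mul_le_mul_of_nonneg_left h6 hyp.le
        rw [mul_sub, mul_sub, hγ] at h7
        have h8 : y^χ * ((k * Real.Gamma k + Real.Gamma (k+1)) * y ^ (-k))
            = C * y ^ (1/2:ℝ) := by rw [hC, ← hhalf]; ring
        rw [h8] at h7
        have h9 : y^χ * (1/(2*k+1)) ≤ y^χ * D := by
          apply mul_le_mul_of_nonneg_left _ hyp.le
          rw [hDdef]; linarith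
        linarith
      · have h6 : ∑' n : ℕ, gg k y ((n:ℝ)+1) ≤ (∫ u in Ioi (0:ℝ), gg k y u)
            + (k * Real.Gamma k + Real.Gamma (k+1)) * y ^ (-k) := by linarith
        have h7 := mul_le_mul_of_nonneg_left h6 hyp.le
        rw [mul_add, hγ] at h7
        have h8 : y^χ * ((k * Real.Gamma k + Real.Gamma (k+1)) * y ^ (-k))
            = C * y ^ (1/2:ℝ) := by rw [hC, ← hhalf]; ring
        rw [h8] at h7
        nlinarith
    · have hC : C = 0 := if_neg (not_lt.2 hkneg)
      have hup := anti_upper hkneg hk' hy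
      have hlo := anti_lower hkneg hk' hk6 hy
      rw [abs_le]
      constructor
      · have h6 : (∫ u in Ioi (0:ℝ), gg k y u) - 1/(2*k+1)
            ≤ ∑' n : ℕ, gg k y ((n:ℝ)+1) := by linarith
        have h7 := mul_le_mul_of_nonneg_left h6 hyp.le
        rw [mul_sub, hγ] at h7
        have h9 : y^χ * (1/(2*k+1)) ≤ y^χ * D := by
          apply mul_le_mul_of_nonneg_left _ hyp.le
          rw [hDdef]; linarith
        have hyh : 0 ≤ y ^ (1/2:ℝ) := (Real.rpow_pos_of_pos hy _).le
        rw [hC]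
        linarith
      · have h7 := mul_le_mul_of_nonneg_left hup hyp.le
        rw [mul_add, mul_one, hγ] at h7
        have hyh : 0 ≤ y ^ (1/2:ℝ) := (Real.rpow_pos_of_pos hy _).le
        have h9 : y^χ * 1 ≤ y^χ * D := by
          apply mul_le_mul_of_nonneg_left _ hyp.le
          rw [hDdef]; linarith
        rw [hC]
        nlinarith
  have hB : Tendsto (fun y : ℝ => y ^ χ * D + C * y ^ (1/2:ℝ)) (𝓝[>] (0:ℝ)) (𝓝 0) := by
    have h1 := (tendsto_rpow_zero' hχ0).mul_const D
    have h2 := (tendsto_rpow_zero' (by norm_num : (0:ℝ) < 1/2)).const_mul C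
    simpa using h1.add h2
  have hlow : Tendsto (fun y : ℝ => Real.Gamma χ / 2 - (y ^ χ * D + C * y ^ (1/2:ℝ)))
      (𝓝[>] (0:ℝ)) (𝓝 (Real.Gamma χ / 2)) := by
    simpa using tendsto_const_nhds.sub hB
  have hhigh : Tendsto (fun y : ℝ => Real.Gamma χ / 2 + (y ^ χ * D + C * y ^ (1/2:ℝ)))
      (𝓝[>] (0:ℝ)) (𝓝 (Real.Gamma χ / 2)) := by
    simpa using tendsto_const_nhds.add hB
  apply tendsto_of_tendsto_of_tendsto_of_le_of_le' hlow hhigh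
  · filter_upwards [self_mem_nhdsWithin] with y hy
    have h := abs_le.1 (key y hy)
    linarith [h.1]
  · filter_upwards [self_mem_nhdsWithin] with y hy
    have h := abs_le.1 (key y hy)
    linarith [h.2]


lemma Theta_eq (k y : ℝ) :
    Theta k y = (if k = 0 then (1:ℝ) else 0) + 2 * ∑' n : ℕ, gg k y ((n:ℝ)+1) := by
  unfold Theta
  congr 2
  apply tsum_congr
  intro n
  unfold gg
  rw [show -((n:ℝ)+1)^2 * y = -y * ((n:ℝ)+1)^2 by ring]

theorem stmt10 (χ c₁ α₁ β₁ : ℝ) (hχ : χ ∈ Ioo (0 : ℝ) 3)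
    (hc₁ : 0 < c₁) (hα₁ : 0 < α₁) (hβ₁ : 0 < β₁)
    (k : ℝ) (hk : k = χ - 1 / 2) :
    Tendsto (fun x : ℝ => x ^ χ * (c₁ * β₁ * Real.exp (-α₁ * x) * Theta k (x * β₁)))
      (nhdsWithin 0 (Ioi 0))
      (nhds (Real.Gamma χ * c₁ * β₁ ^ (1 - χ))) := by
  obtain ⟨hχ0, hχ3⟩ := hχ
  have hk' : (-1:ℝ) < 2*k := by rw [hk]; linarith
  have hk6 : 2*k ≤ 6 := by rw [hk]; linarith
  have hχk : χ = k + 1/2 := by rw [hk]; ring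
  set δ : ℝ := if k = 0 then (1:ℝ) else 0 with hδ
  have hcomp : Tendsto (fun x : ℝ => x*β₁) (𝓝[>] (0:ℝ)) (𝓝[>] (0:ℝ)) := by
    apply tendsto_nhdsWithin_of_tendsto_nhds_of_eventually_within
    · have h : Tendsto (fun x:ℝ => x*β₁) (𝓝 0) (𝓝 (0*β₁)) := tendsto_id.mul_const β₁
      rw [zero_mul] at h
      exact h.mono_left nhdsWithin_le_nhds
    · filter_upwards [self_mem_nhdsWithin] with x hx
      exact mul_pos hx hβ₁
  have h1 : Tendsto (fun x : ℝ => (x*β₁) ^ χ * ∑' n : ℕ, gg k (x*β₁) ((n:ℝ)+1))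
      (𝓝[>] (0:ℝ)) (𝓝 (Real.Gamma χ / 2)) :=
    (main_tendsto hk' hk6 hχk).comp hcomp
  have hexp : Tendsto (fun x:ℝ => Real.exp (-α₁*x)) (𝓝[>] (0:ℝ)) (𝓝 1) := by
    have hc : Continuous fun x:ℝ => Real.exp (-α₁*x) :=
      Real.continuous_exp.comp (continuous_const.mul continuous_id)
    have h := (hc.tendsto 0).mono_left (nhdsWithin_le_nhds (s := Ioi (0:ℝ)))
    simpa using h
  have hpow : Tendsto (fun x:ℝ => x ^ χ) (𝓝[>] (0:ℝ)) (𝓝 0) := tendsto_rpow_zero' hχ0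
  have hfinal : Tendsto (fun x : ℝ => c₁ * β₁ * Real.exp (-α₁*x) *
      (δ * x ^ χ + 2 * β₁ ^ (-χ) * ((x*β₁) ^ χ * ∑' n : ℕ, gg k (x*β₁) ((n:ℝ)+1))))
      (𝓝[>] (0:ℝ))
      (𝓝 (c₁ * β₁ * 1 * (δ * 0 + 2 * β₁ ^ (-χ) * (Real.Gamma χ / 2)))) :=
    ((hexp.const_mul (c₁*β₁)).mul ((hpow.const_mul δ).add (h1.const_mul (2 * β₁ ^ (-χ)))))
  have hval : c₁ * β₁ * 1 * (δ * 0 + 2 * β₁ ^ (-χ) * (Real.Gamma χ / 2))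
      = Real.Gamma χ * c₁ * β₁ ^ (1 - χ) := by
    rw [show (1:ℝ) - χ = 1 + -χ by ring, Real.rpow_add hβ₁, Real.rpow_one]
    ring
  rw [hval] at hfinal
  apply hfinal.congr'
  filter_upwards [self_mem_nhdsWithin] with x hx
  have hx0 : (0:ℝ) < x := hx
  have e1 : (x*β₁) ^ χ = x ^ χ * β₁ ^ χ := Real.mul_rpow hx0.le hβ₁.le
  have e2 : β₁ ^ (-χ) * β₁ ^ χ = 1 := by
    rw [← Real.rpow_add hβ₁, neg_add_cancel, Real.rpow_zero]
  have e3 : β₁ ^ (-χ) * (x*β₁) ^ χ = x ^ χ := by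
    rw [e1, show β₁ ^ (-χ) * (x ^ χ * β₁ ^ χ) = (β₁ ^ (-χ) * β₁ ^ χ) * x ^ χ by ring, e2,
      one_mul]
  rw [Theta_eq]
  linear_combination (c₁ * β₁ * Real.exp (-α₁*x) * 2 * (∑' n : ℕ, gg k (x*β₁) ((n:ℝ)+1))) * e3
end
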